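/- arXiv:math/9806147 — 2 statements merged into one kernel-verified Lean document; each statement's English description precedes it below -/
import Mathlib

section
/- Let K be a field, let r ≥ 1 and n, m ≥ 0, and let A = [Y_{r+n,r+n+m} ; −X_{r+m,r+m+n}] be the (2r+n+m) × (r+n+m) matrix of linear forms in x_0,…,x_n,y_0,…,y_m. If d > max(n,m) and (x,y) ∈ K^{n+1} × K^{m+1} is a point with rank A(x,y) ≤ r+n+m−d, then x = 0 and y = 0. In other words, the degeneracy locus Z_d of points of P^{n+m+1} where A drops rank by at least d is empty for d > max(n,m). -/
/-- The `p × (p + n)` banded matrix whose `(i,j)` entry is `x (j - i)` if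
`0 ≤ j - i ≤ n` and `0` otherwise. -/
def bandedMatrix {K : Type*} [Field K] (p n : ℕ) (x : Fin (n + 1) → K) :
    Matrix (Fin p) (Fin (p + n)) K :=
  fun i j =>
    if h : (i : ℕ) ≤ (j : ℕ) ∧ (j : ℕ) - (i : ℕ) ≤ n then
      x ⟨(j : ℕ) - (i : ℕ), Nat.lt_succ_of_le h.2⟩
    else 0

/-- The evaluation `A(x,y)` of the `(2r+n+m) × (r+n+m)` matrix
`A = [Y_{r+n,r+n+m} ; -X_{r+m,r+m+n}]` of linear forms at the point `(x, y)`. -/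
def AmatEval {K : Type*} [Field K] (r n m : ℕ)
    (x : Fin (n + 1) → K) (y : Fin (m + 1) → K) :
    Matrix (Fin (r + n) ⊕ Fin (r + m)) (Fin (r + n + m)) K :=
  Matrix.fromRows (bandedMatrix (r + n) m y)
    ((-(bandedMatrix (r + m) n x)).submatrix id
      (Fin.cast (show r + n + m = r + m + n by omega)))

/-- Taking a subset of the rows and permuting the columns reduces the rank
(rectangular version). -/
theorem rank_submatrix_le' {K : Type*} [Field K] {k l m n' : Type*} [Fintype l] [Fintype n']
    (f : m → k) (e : n' ≃ l) (A : Matrix k l K) :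
    (A.submatrix f e).rank ≤ A.rank := by
  rw [Matrix.rank, Matrix.rank, Matrix.mulVecLin_submatrix, LinearMap.range_comp,
    LinearMap.range_comp,
    show LinearMap.funLeft K K e.symm = LinearEquiv.funCongrLeft K K e.symm from rfl,
    LinearEquiv.range, Submodule.map_top]
  exact Submodule.finrank_map_le _ _

/-- A nonzero banded matrix has full row rank. -/
theorem le_rank_bandedMatrix {K : Type*} [Field K] (p n : ℕ) (x : Fin (n + 1) → K)
    (hx : x ≠ 0) : p ≤ (bandedMatrix p n x).rank := by
  have hP : ∃ j : ℕ, ∃ i : Fin (n + 1), (i : ℕ) = j ∧ x i ≠ 0 := by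
    obtain ⟨i, hi⟩ := Function.ne_iff.mp hx
    exact ⟨i, i, rfl, hi⟩
  classical
  set k := Nat.find hP with hk
  obtain ⟨i₀, hi₀, hxi₀⟩ := Nat.find_spec hP
  have hkn : k ≤ n := by have := i₀.isLt; omega
  have hmin : ∀ i : Fin (n + 1), (i : ℕ) < k → x i = 0 := by
    intro i hik
    by_contra h
    exact Nat.find_min hP hik ⟨i, rfl, h⟩
  -- the square submatrix with columns k, k+1, ..., k+p-1
  set f : Fin p → Fin (p + n) := fun j => ⟨k + j, by omega⟩ with hf
  set T : Matrix (Fin p) (Fin p) K :=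
    Matrix.submatrix (bandedMatrix p n x).transpose f (Equiv.refl (Fin p)) with hT
  have hTij : ∀ i j : Fin p, T i j = bandedMatrix p n x j (f i) := fun i j => rfl
  have htri : T.BlockTriangular OrderDual.toDual := by
    intro i j hij
    have hij' : (i : ℕ) < (j : ℕ) := hij
    rw [hTij]
    unfold bandedMatrix
    have hfi : ((f i : Fin (p + n)) : ℕ) = k + (i : ℕ) := rfl
    split_ifs with h
    · exact hmin _ (by show ((f i : Fin (p + n)) : ℕ) - (j : ℕ) < k; omega)
    · rfl
  have hdiag : ∀ i : Fin p, T i i = x i₀ := by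
    intro i
    rw [hTij]
    unfold bandedMatrix
    have hfi : ((f i : Fin (p + n)) : ℕ) = k + (i : ℕ) := rfl
    rw [dif_pos (by omega)]
    apply congrArg
    apply Fin.ext
    show ((f i : Fin (p + n)) : ℕ) - (i : ℕ) = (i₀ : ℕ)
    omega
  have hdet : T.det ≠ 0 := by
    rw [Matrix.det_of_lowerTriangular T htri]
    rw [Finset.prod_congr rfl fun i _ => hdiag i, Finset.prod_const]
    exact pow_ne_zero _ hxi₀
  have hrankT : T.rank = p := by
    rw [Matrix.rank_of_isUnit T ((Matrix.isUnit_iff_isUnit_det T).mpr hdet.isUnit)]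
    exact Fintype.card_fin p
  calc p = T.rank := hrankT.symm
    _ ≤ (bandedMatrix p n x).transpose.rank := rank_submatrix_le' f (Equiv.refl _) _
    _ = (bandedMatrix p n x).rank := Matrix.rank_transpose _

theorem rank_neg' {K : Type*} [Field K] {m n : Type*} [Fintype n] [DecidableEq n]
    (A : Matrix m n K) : (-A).rank = A.rank := by
  have h : -A = A * (-1 : Matrix n n K) := by rw [Matrix.mul_neg, Matrix.mul_one]
  rw [h]
  exact Matrix.rank_mul_eq_left_of_isUnit_det (-1 : Matrix n n K) A
    ((Matrix.isUnit_iff_isUnit_det _).mp isUnit_one.neg)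

/-- If `d > max(n,m)` then the degeneracy locus `Z_d` of `A` is empty: any point where
`A` drops rank by at least `d` is the origin. -/
theorem Zd_empty_of_gt_max (K : Type*) [Field K] (r n m d : ℕ) (hr : 1 ≤ r)
    (hd : d > max n m) (x : Fin (n + 1) → K) (y : Fin (m + 1) → K)
    (hrk : ((AmatEval r n m x y).rank : ℤ) ≤ (r : ℤ) + n + m - d) :
    x = 0 ∧ y = 0 := by
  have hdn : n < d := lt_of_le_of_lt (le_max_left n m) hd
  have hdm : m < d := lt_of_le_of_lt (le_max_right n m) hd
  constructor
  · by_contra hx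
    -- bottom block has rank r + m
    have hsub : (AmatEval r n m x y).submatrix Sum.inr (Equiv.refl (Fin (r + n + m))) =
        ((-(bandedMatrix (r + m) n x)).submatrix id
          (Fin.cast (show r + n + m = r + m + n by omega))) := rfl
    have h1 : ((AmatEval r n m x y).submatrix Sum.inr (Equiv.refl _)).rank ≤
        (AmatEval r n m x y).rank := rank_submatrix_le' _ _ _
    have h2 : ((-(bandedMatrix (r + m) n x)).submatrix id
        (Fin.cast (show r + n + m = r + m + n by omega))).rank =
        (-(bandedMatrix (r + m) n x)).rank := by
      have : ((-(bandedMatrix (r + m) n x)).submatrix id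
          (Fin.cast (show r + n + m = r + m + n by omega))) =
          ((-(bandedMatrix (r + m) n x)).submatrix id
          (finCongr (show r + n + m = r + m + n by omega))) := rfl
      rw [this]
      apply le_antisymm
      · exact rank_submatrix_le' id (finCongr _) _
      · have := rank_submatrix_le' id
          (finCongr (show r + n + m = r + m + n by omega)).symm
          ((-(bandedMatrix (r + m) n x)).submatrix id
            (finCongr (show r + n + m = r + m + n by omega)))
        rw [Matrix.submatrix_submatrix, Equiv.self_comp_symm] at this
        simpa using this
    have h3 : (r + m : ℕ) ≤ (AmatEval r n m x y).rank := by
      have hb := le_rank_bandedMatrix (r + m) n x hx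
      rw [← rank_neg' (bandedMatrix (r + m) n x), ← h2, ← hsub] at hb
      exact le_trans hb h1
    omega
  · by_contra hy
    have hsub : (AmatEval r n m x y).submatrix Sum.inl (Equiv.refl (Fin (r + n + m))) =
        bandedMatrix (r + n) m y := rfl
    have h1 : ((AmatEval r n m x y).submatrix Sum.inl (Equiv.refl _)).rank ≤
        (AmatEval r n m x y).rank := rank_submatrix_le' _ _ _
    rw [hsub] at h1
    have h3 : (r + n : ℕ) ≤ (AmatEval r n m x y).rank :=
      le_trans (le_rank_bandedMatrix _ _ _ hy) h1
    omega
end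

section
/- Let K be a field, let r ≥ 1 and n, m ≥ 0, and let A = [Y_{r+n,r+n+m} ; −X_{r+m,r+m+n}] be the (2r+n+m) × (r+n+m) matrix of linear forms in x_0,…,x_n,y_0,…,y_m. Let 1 ≤ d ≤ min(n,m)+1 and let t = (t_0,…,t_{d−1}) ∈ K^d be nonzero. Define x ∈ K^{n+1} by x_i = t_i for 0 ≤ i ≤ d−1 and x_i = 0 for i ≥ d, and define y ∈ K^{m+1} by y_{m−i} = t_{d−1−i} for 0 ≤ i ≤ d−1 and y_{m−i} = 0 for i ≥ d. Then rank A(x,y) > r+n+m−d. -/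
lemma AmatEval_inr {K : Type*} [Field K] (r n m : ℕ)
    (x : Fin (n + 1) → K) (y : Fin (m + 1) → K) (i : Fin (r + m)) (c : Fin (r + n + m)) :
    AmatEval r n m x y (Sum.inr i) c =
      -(if h : (i : ℕ) ≤ (c : ℕ) ∧ (c : ℕ) - (i : ℕ) ≤ n then
          x ⟨(c : ℕ) - (i : ℕ), Nat.lt_succ_of_le h.2⟩ else 0) := by
  simp [AmatEval, bandedMatrix, Matrix.fromRows_apply_inr]

lemma AmatEval_inl {K : Type*} [Field K] (r n m : ℕ)
    (x : Fin (n + 1) → K) (y : Fin (m + 1) → K) (i : Fin (r + n)) (c : Fin (r + n + m)) :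
    AmatEval r n m x y (Sum.inl i) c =
      (if h : (i : ℕ) ≤ (c : ℕ) ∧ (c : ℕ) - (i : ℕ) ≤ m then
          y ⟨(c : ℕ) - (i : ℕ), Nat.lt_succ_of_le h.2⟩ else 0) := by
  simp [AmatEval, bandedMatrix, Matrix.fromRows_apply_inl]

/-- On the linear subspace parametrized by `t = (t_0, …, t_{d-1})`, with
`x_i = t_i` for `i < d`, `x_i = 0` otherwise, and `y_{m-i} = t_{d-1-i}` for `i < d`,
`y_{m-i} = 0` otherwise, the matrix `A` does not degenerate to rank `r + n + m - d`
at any nonzero `t`. -/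
theorem A_nondegenerate_on_subspace (K : Type*) [Field K] (r n m d : ℕ) (hr : 1 ≤ r)
    (hd1 : 1 ≤ d) (hd2 : d ≤ min n m + 1) (t : Fin d → K) (ht : t ≠ 0) :
    (AmatEval r n m
        (fun i : Fin (n + 1) => if h : (i : ℕ) < d then t ⟨(i : ℕ), h⟩ else 0)
        (fun j : Fin (m + 1) => if h : m < (j : ℕ) + d then
          t ⟨(j : ℕ) + d - 1 - m, by omega⟩ else 0)).rank
      > r + n + m - d := by
  classical
  have hdn : d ≤ n + 1 := by have := min_le_left n m; omega
  have hdm : d ≤ m + 1 := by have := min_le_right n m; omega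
  set xf : Fin (n + 1) → K :=
    fun i : Fin (n + 1) => if h : (i : ℕ) < d then t ⟨(i : ℕ), h⟩ else 0 with hxf
  set yf : Fin (m + 1) → K :=
    fun j : Fin (m + 1) => if h : m < (j : ℕ) + d then
      t ⟨(j : ℕ) + d - 1 - m, by omega⟩ else 0 with hyf
  set A := AmatEval r n m xf yf with hAdef
  -- the maximal index where t is nonzero
  have hex : ∃ i, t i ≠ 0 := by
    by_contra h
    push_neg at h
    exact ht (funext fun i => h i)
  set s : Finset (Fin d) := Finset.univ.filter (fun i => t i ≠ 0) with hs
  have hsne : s.Nonempty := by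
    obtain ⟨i, hi⟩ := hex
    exact ⟨i, by simp [hs, hi]⟩
  set b : Fin d := s.max' hsne with hbdef
  have htb : t b ≠ 0 := by
    have := s.max'_mem hsne
    simp [hs] at this
    exact this
  have hmax : ∀ j : Fin d, (b : ℕ) < (j : ℕ) → t j = 0 := by
    intro j hj
    by_contra h
    have h1 : j ≤ b := Finset.le_max' s j (by simp [hs, h])
    have h2 : (j : ℕ) ≤ (b : ℕ) := h1
    omega
  have hb := b.isLt
  -- x and y values above the band of t vanish
  have hxval : ∀ (i : Fin (n + 1)), (b : ℕ) < (i : ℕ) → xf i = 0 := by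
    intro i hi
    simp only [hxf]
    by_cases h : (i : ℕ) < d
    · simp only [dif_pos h]
      exact hmax ⟨(i : ℕ), h⟩ hi
    · simp only [dif_neg h]
  have hyval : ∀ (j : Fin (m + 1)), m + (b : ℕ) + 1 - d < (j : ℕ) → yf j = 0 := by
    intro j hj
    simp only [hyf]
    by_cases h : m < (j : ℕ) + d
    · simp only [dif_pos h]
      exact hmax ⟨(j : ℕ) + d - 1 - m, by omega⟩ (by show (b : ℕ) < (j : ℕ) + d - 1 - m; omega)
    · simp only [dif_neg h]
  have hxb : xf ⟨(b : ℕ), by omega⟩ = t b := by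
    simp only [hxf]
    rw [dif_pos (show (b : ℕ) < d from hb)]
  have hyb : yf ⟨m + (b : ℕ) + 1 - d, by omega⟩ = t b := by
    simp only [hyf]
    rw [dif_pos (show m < (m + (b : ℕ) + 1 - d) + d by omega)]
    congr 1
    exact Fin.ext (by show m + (b : ℕ) + 1 - d + d - 1 - m = (b : ℕ); omega)
  -- row and column selections
  have hrow : ∀ j : ℕ, j < r + n + m - d + 1 → ¬ (j < r + m) → j + d - 1 - m < r + n := by
    intro j h1 h2; omega
  have hcol : ∀ k : ℕ, k < r + n + m - d + 1 → k + (b : ℕ) < r + n + m := by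
    intro k h1; omega
  set φ : Fin (r + n + m - d + 1) → Fin (r + n) ⊕ Fin (r + m) := fun j =>
    if h : (j : ℕ) < r + m then Sum.inr ⟨j, h⟩
    else Sum.inl ⟨(j : ℕ) + d - 1 - m, hrow j j.isLt h⟩ with hφ
  set ψ : Fin (r + n + m - d + 1) → Fin (r + n + m) := fun k =>
    ⟨(k : ℕ) + (b : ℕ), hcol k k.isLt⟩ with hψ
  set C : Matrix (Fin (r + n + m - d + 1)) (Fin (r + n + m - d + 1)) K :=
    fun k l => A (φ k) (ψ l) with hC
  -- entries of C
  have hCzero : ∀ k l : Fin (r + n + m - d + 1), (k : ℕ) < (l : ℕ) → C k l = 0 := by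
    intro k l hkl
    have hk := k.isLt
    have hl := l.isLt
    rw [hC]
    simp only [hAdef, hφ, hψ]
    by_cases hcase : (k : ℕ) < r + m
    · rw [dif_pos hcase, AmatEval_inr]
      by_cases h1 : (k : ℕ) ≤ (l : ℕ) + (b : ℕ) ∧ (l : ℕ) + (b : ℕ) - (k : ℕ) ≤ n
      · rw [dif_pos h1, hxval _ (by show (b : ℕ) < (l : ℕ) + (b : ℕ) - (k : ℕ); omega)]
        simp
      · rw [dif_neg h1]
        simp
    · rw [dif_neg hcase, AmatEval_inl]
      by_cases h1 : (k : ℕ) + d - 1 - m ≤ (l : ℕ) + (b : ℕ) ∧ (l : ℕ) + (b : ℕ) - ((k : ℕ) + d - 1 - m) ≤ m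
      · rw [dif_pos h1, hyval _ (by show m + (b : ℕ) + 1 - d < (l : ℕ) + (b : ℕ) - ((k : ℕ) + d - 1 - m); omega)]
      · rw [dif_neg h1]
  have hCdiag : ∀ k : Fin (r + n + m - d + 1), C k k ≠ 0 := by
    intro k
    have hk := k.isLt
    rw [hC]
    simp only [hAdef, hφ, hψ]
    by_cases hcase : (k : ℕ) < r + m
    · rw [dif_pos hcase, AmatEval_inr]
      rw [dif_pos (show (k : ℕ) ≤ (k : ℕ) + (b : ℕ) ∧ (k : ℕ) + (b : ℕ) - (k : ℕ) ≤ n from by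
        constructor <;> omega)]
      rw [show (⟨(k : ℕ) + (b : ℕ) - (k : ℕ), by omega⟩ : Fin (n + 1))
          = ⟨(b : ℕ), by omega⟩ from Fin.ext (by show (k : ℕ) + (b : ℕ) - (k : ℕ) = (b : ℕ); omega)]
      rw [hxb]
      simpa using htb
    · rw [dif_neg hcase, AmatEval_inl]
      rw [dif_pos (show (k : ℕ) + d - 1 - m ≤ (k : ℕ) + (b : ℕ) ∧ (k : ℕ) + (b : ℕ) - ((k : ℕ) + d - 1 - m) ≤ m from by
        constructor <;> omega)]
      rw [show (⟨(k : ℕ) + (b : ℕ) - ((k : ℕ) + d - 1 - m), by omega⟩ : Fin (m + 1))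
          = ⟨m + (b : ℕ) + 1 - d, by omega⟩ from Fin.ext
            (by show (k : ℕ) + (b : ℕ) - ((k : ℕ) + d - 1 - m) = m + (b : ℕ) + 1 - d; omega)]
      rw [hyb]
      exact htb
  -- C is invertible
  have hdet : C.det ≠ 0 := by
    rw [Matrix.det_of_lowerTriangular C (fun i j hij => hCzero i j hij)]
    exact Finset.prod_ne_zero_iff.mpr fun k _ => hCdiag k
  have hCrank : C.rank = r + n + m - d + 1 := by
    rw [Matrix.rank_of_isUnit C ((Matrix.isUnit_iff_isUnit_det C).mpr
      (isUnit_iff_ne_zero.mpr hdet))]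
    simp
  -- C = P * A * Q
  set P : Matrix (Fin (r + n + m - d + 1)) (Fin (r + n) ⊕ Fin (r + m)) K :=
    fun j i => if i = φ j then 1 else 0 with hP
  set Q : Matrix (Fin (r + n + m)) (Fin (r + n + m - d + 1)) K :=
    fun c l => if c = ψ l then 1 else 0 with hQ
  have hPA : P * A = fun j c => A (φ j) c := by
    ext j c
    rw [Matrix.mul_apply]
    simp [hP, Matrix.mul_apply, Finset.sum_ite_eq]
  have hfact : P * A * Q = C := by
    ext k l
    rw [Matrix.mul_apply]
    simp only [hPA, hQ, mul_ite, mul_one, mul_zero]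
    rw [Finset.sum_ite_eq' Finset.univ (ψ l) (fun c => A (φ k) c)]
    simp [hC]
  have hle : C.rank ≤ A.rank := by
    calc C.rank = (P * A * Q).rank := by rw [hfact]
    _ ≤ (P * A).rank := Matrix.rank_mul_le_left _ _
    _ ≤ A.rank := Matrix.rank_mul_le_right _ _
  omega
end
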